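/- For every integer d ≥ 1, the identity Σ_{x ∈ ℕ^d} t^{n(x)} q^{W(x)} = ∏_{i=0}^{d−1} (1 − t q^i)^{−1} holds in the formal power series ring ℤ[[t,q]]; in particular the sum on the left is a well-defined power series (each coefficient is a finite count). -/

import Mathlib

namespace Spiral

/-- The size `n(x) = n₁ + ⋯ + n_d` of a configuration `x ∈ ℕ^d`. -/
def size {d : ℕ} (x : Fin d → ℕ) : ℕ := ∑ i, x i

/-- The weight `W(x) = Σ_{i<j} (max(0, x_j − x_i) + max(0, x_i − x_j − 1))`
(truncated ℕ-subtraction realizes the `max(0,·)`). -/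
def weight {d : ℕ} (x : Fin d → ℕ) : ℕ :=
  ∑ i : Fin d, ∑ j : Fin d, if i < j then (x j - x i) + (x i - x j - 1) else 0

end Spiral

namespace Spiral

/-- The generating series `Σ_{x ∈ ℕ^d} t^{n(x)} q^{W(x)} ∈ ℤ[[t,q]]` (with `t = X 0`,
`q = X 1`), defined coefficientwise: the coefficient of `t^n q^W` is the number of
configurations `x ∈ ℕ^d` with `size x = n` and `weight x = W`. -/
noncomputable def genSeries (d : ℕ) : MvPowerSeries (Fin 2) ℤ :=
  fun e => (Nat.card {x : Fin d → ℕ // size x = e 0 ∧ weight x = e 1} : ℤ)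

end Spiral

namespace SpiralAux

open Finset Function Spiral



variable {d : ℕ}

/-! ### Beads and ranks -/

def bead (x : Fin d → ℕ) (i : Fin d) : ℕ := d * x i + i

lemma bead_inj (x : Fin d → ℕ) : Function.Injective (bead x) := by
  intro i j h
  unfold bead at h
  have hi := i.isLt
  have hj := j.isLt
  have hx : x i = x j := by
    rcases lt_trichotomy (x i) (x j) with hl | he | hl
    · have h1 : d * (x i + 1) ≤ d * x j := Nat.mul_le_mul_left d hl
      have h2 : d * (x i + 1) = d * x i + d := by ring
      omega
    · exact he
    · have h1 : d * (x j + 1) ≤ d * x i := Nat.mul_le_mul_left d hl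
      have h2 : d * (x j + 1) = d * x j + d := by ring
      omega
  rw [hx] at h
  exact Fin.ext (by omega)

def rk (x : Fin d → ℕ) (i : Fin d) : ℕ := (univ.filter (fun j => bead x j < bead x i)).card

lemma rk_lt (x : Fin d → ℕ) (i : Fin d) : rk x i < d := by
  have hsub : univ.filter (fun j => bead x j < bead x i) ⊆ univ.erase i := by
    intro j hj
    rw [mem_filter] at hj
    rw [mem_erase]
    refine ⟨?_, mem_univ j⟩
    intro hji
    subst hji
    exact lt_irrefl _ hj.2
  have h1 := Finset.card_le_card hsub
  rw [Finset.card_erase_of_mem (mem_univ i), Finset.card_univ, Fintype.card_fin] at h1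
  have := i.isLt
  unfold rk
  omega

lemma rk_lt_rk {x : Fin d → ℕ} {i j : Fin d} (h : bead x i < bead x j) : rk x i < rk x j := by
  apply Finset.card_lt_card
  rw [Finset.ssubset_iff_of_subset]
  · exact ⟨i, mem_filter.mpr ⟨mem_univ i, h⟩, by simp⟩
  · intro k hk
    rw [mem_filter] at hk ⊢
    exact ⟨mem_univ k, lt_trans hk.2 h⟩

def rkF (x : Fin d → ℕ) : Fin d → Fin d := fun i => ⟨rk x i, rk_lt x i⟩

lemma rkF_bij (x : Fin d → ℕ) : Function.Bijective (rkF x) := by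
  rw [← Finite.injective_iff_bijective]
  intro i j h
  have hv : rk x i = rk x j := congrArg Fin.val h
  rcases lt_trichotomy (bead x i) (bead x j) with hl | he | hl
  · exact absurd hv (Nat.ne_of_lt (rk_lt_rk hl))
  · exact bead_inj x he
  · exact absurd hv.symm (Nat.ne_of_lt (rk_lt_rk hl))

noncomputable def idx (x : Fin d → ℕ) : Fin d → Fin d := (Equiv.ofBijective _ (rkF_bij x)).symm

lemma rkF_idx (x : Fin d → ℕ) (p : Fin d) : rkF x (idx x p) = p :=
  (Equiv.ofBijective _ (rkF_bij x)).apply_symm_apply p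

lemma rk_idx (x : Fin d → ℕ) (p : Fin d) : rk x (idx x p) = (p : ℕ) :=
  congrArg Fin.val (rkF_idx x p)

lemma idx_rkF (x : Fin d → ℕ) (i : Fin d) : idx x (rkF x i) = i :=
  (Equiv.ofBijective _ (rkF_bij x)).symm_apply_apply i

/-! ### Insertion -/

noncomputable def ins (p : Fin d) (x : Fin d → ℕ) : Fin d → ℕ :=
  Function.update x (idx x p) (x (idx x p) + 1)

def Cap (x : Fin d → ℕ) (i : Fin d) : Prop := ∀ j, bead x j ≤ bead x i + d

lemma bead_update_self (x : Fin d → ℕ) (i : Fin d) :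
    bead (Function.update x i (x i + 1)) i = bead x i + d := by
  unfold bead
  rw [Function.update_self]
  ring

lemma bead_update_ne (x : Fin d → ℕ) {i j : Fin d} (v : ℕ) (h : j ≠ i) :
    bead (Function.update x i v) j = bead x j := by
  unfold bead
  rw [Function.update_of_ne h]

lemma sum_update_helper' {k : ℕ} (f : Fin k → ℕ) (i : Fin k) (c : ℕ) :
    (∑ p, Function.update f i c p) + f i = (∑ p, f p) + c := by
  classical
  rw [Finset.sum_update_of_mem (Finset.mem_univ i)]
  have h1 : Finset.univ \ {i} = Finset.univ.erase i := by
    ext j; simp [Finset.mem_erase, and_comm]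
  rw [h1]
  have h2 := Finset.sum_erase_add Finset.univ f (Finset.mem_univ i)
  omega

lemma size_ins (p : Fin d) (x : Fin d → ℕ) : size (ins p x) = size x + 1 := by
  unfold size ins
  have := sum_update_helper' x (idx x p) (x (idx x p) + 1)
  omega

lemma ins_max {x : Fin d → ℕ} {p : Fin d} (hc : Cap x (idx x p)) :
    ∀ j, j ≠ idx x p → bead (ins p x) j < bead (ins p x) (idx x p) := by
  intro j hj
  set i := idx x p
  rw [ins, bead_update_ne x _ hj, bead_update_self]
  rcases Nat.lt_or_ge (bead x j) (bead x i + d) with h | h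
  · exact h
  · exfalso
    have heq : bead x j = bead x i + d := le_antisymm (hc j) h
    -- mod d argument
    have hmodj : bead x j % d = (j : ℕ) := by
      unfold bead
      rw [Nat.mul_add_mod]
      exact Nat.mod_eq_of_lt j.isLt
    have hmodi : (bead x i + d) % d = (i : ℕ) := by
      rw [Nat.add_mod_right]
      unfold bead
      rw [Nat.mul_add_mod]
      exact Nat.mod_eq_of_lt i.isLt
    apply hj
    apply Fin.ext
    rw [← hmodj, ← hmodi, heq]

lemma cap_val_gt {x : Fin d → ℕ} {i : Fin d} (hc : Cap x i) {j : Fin d}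
    (h : (i : ℕ) < j) : x j ≤ x i := by
  have hb := hc j
  unfold bead at hb
  by_contra hcon
  push_neg at hcon
  have h1 : d * (x i + 1) ≤ d * x j := Nat.mul_le_mul_left d hcon
  have h2 : d * (x i + 1) = d * x i + d := by ring
  omega

lemma cap_val_lt {x : Fin d → ℕ} {i : Fin d} (hc : Cap x i) {j : Fin d}
    (h : (j : ℕ) < i) : x j ≤ x i + 1 := by
  have hb := hc j
  unfold bead at hb
  by_contra hcon
  push_neg at hcon
  have h1 : d * (x i + 2) ≤ d * x j := Nat.mul_le_mul_left d hcon
  have h2 : d * (x i + 2) = d * x i + d + d := by ring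
  have := i.isLt
  omega

lemma bead_lt_iff_gt {x : Fin d → ℕ} {i j : Fin d} (h : (j : ℕ) < i) :
    bead x j < bead x i ↔ x j ≤ x i := by
  unfold bead
  constructor
  · intro hb
    by_contra hcon
    push_neg at hcon
    have h1 : d * (x i + 1) ≤ d * x j := Nat.mul_le_mul_left d hcon
    have h2 : d * (x i + 1) = d * x i + d := by ring
    have := j.isLt
    omega
  · intro hle
    have h1 : d * x j ≤ d * x i := Nat.mul_le_mul_left d hle
    omega

lemma bead_lt_iff_lt {x : Fin d → ℕ} {i j : Fin d} (h : (i : ℕ) < j) :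
    bead x j < bead x i ↔ x j < x i := by
  unfold bead
  constructor
  · intro hb
    by_contra hcon
    push_neg at hcon
    have h1 : d * x i ≤ d * x j := Nat.mul_le_mul_left d hcon
    omega
  · intro hlt
    have h1 : d * (x j + 1) ≤ d * x i := Nat.mul_le_mul_left d hlt
    have h2 : d * (x j + 1) = d * x j + d := by ring
    have := j.isLt
    omega


lemma weight_ins {x : Fin d → ℕ} {p : Fin d} (hc : Cap x (idx x p)) :
    weight (ins p x) = weight x + (p : ℕ) := by
  classical
  set i₀ := idx x p with hi₀
  have hup : ∀ j : Fin d, j ≠ i₀ → ins p x j = x j := by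
    intro j hj
    exact Function.update_of_ne hj _ x
  have hup0 : ins p x i₀ = x i₀ + 1 := Function.update_self _ _ _
  -- pointwise identity
  have key : ∀ i j : Fin d,
      (if i < j then (ins p x j - ins p x i) + (ins p x i - ins p x j - 1) else 0)
      = ((if i < j then (x j - x i) + (x i - x j - 1) else 0)
        + (if i = i₀ ∧ i < j ∧ bead x j < bead x i₀ then 1 else 0))
        + (if j = i₀ ∧ i < j ∧ bead x i < bead x i₀ then 1 else 0) := by
    intro i j
    by_cases hij : i < j
    · have hijv : (i : ℕ) < (j : ℕ) := hij
      by_cases hi : i = i₀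
      · subst hi
        have hj : j ≠ i₀ := by
          intro hj; rw [hj] at hij; exact lt_irrefl _ hij
        have hne : ¬ (j = i₀ ∧ i₀ < j ∧ bead x i₀ < bead x i₀) := fun hcon => hj hcon.1
        rw [hup j hj, hup0, if_pos hij, if_pos hij, if_neg hne]
        have hle : x j ≤ x i₀ := cap_val_gt hc hijv
        have hPiff : bead x j < bead x i₀ ↔ x j < x i₀ := bead_lt_iff_lt hijv
        by_cases hP : bead x j < bead x i₀
        · have hlt : x j < x i₀ := hPiff.mp hP
          have hyes : i₀ = i₀ ∧ i₀ < j ∧ bead x j < bead x i₀ := ⟨rfl, hij, hP⟩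
          rw [if_pos hyes]
          omega
        · have hge : x j = x i₀ := by
            have := fun h => hP (hPiff.mpr h)
            omega
          have hno : ¬ (i₀ = i₀ ∧ i₀ < j ∧ bead x j < bead x i₀) := fun hcon => hP hcon.2.2
          rw [if_neg hno]
          omega
      · by_cases hj : j = i₀
        · subst hj
          have hne : ¬ (i = i₀ ∧ i < i₀ ∧ bead x i₀ < bead x i₀) := fun hcon => hi hcon.1
          rw [hup i hi, hup0, if_pos hij, if_pos hij, if_neg hne]
          have hle : x i ≤ x i₀ + 1 := cap_val_lt hc hijv
          have hPiff : bead x i < bead x i₀ ↔ x i ≤ x i₀ := bead_lt_iff_gt hijv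
          by_cases hP : bead x i < bead x i₀
          · have hlt : x i ≤ x i₀ := hPiff.mp hP
            have hyes : i₀ = i₀ ∧ i < i₀ ∧ bead x i < bead x i₀ := ⟨rfl, hij, hP⟩
            rw [if_pos hyes]
            omega
          · have hge : x i = x i₀ + 1 := by
              have := fun h => hP (hPiff.mpr h)
              omega
            have hno : ¬ (i₀ = i₀ ∧ i < i₀ ∧ bead x i < bead x i₀) := fun hcon => hP hcon.2.2
            rw [if_neg hno]
            omega
        · have hn1 : ¬ (i = i₀ ∧ i < j ∧ bead x j < bead x i₀) := fun hcon => hi hcon.1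
          have hn2 : ¬ (j = i₀ ∧ i < j ∧ bead x i < bead x i₀) := fun hcon => hj hcon.1
          rw [hup i hi, hup j hj, if_pos hij, if_neg hn1, if_neg hn2]
          omega
    · have hn1 : ¬ (i = i₀ ∧ i < j ∧ bead x j < bead x i₀) := fun hcon => hij hcon.2.1
      have hn2 : ¬ (j = i₀ ∧ i < j ∧ bead x i < bead x i₀) := fun hcon => hij hcon.2.1
      rw [if_neg hij, if_neg hij, if_neg hn1, if_neg hn2]
  have hw : weight (ins p x)
      = weight x
        + (∑ i : Fin d, ∑ j : Fin d, if i = i₀ ∧ i < j ∧ bead x j < bead x i₀ then 1 else 0)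
        + (∑ i : Fin d, ∑ j : Fin d, if j = i₀ ∧ i < j ∧ bead x i < bead x i₀ then 1 else 0) := by
    unfold weight
    rw [← Finset.sum_add_distrib, ← Finset.sum_add_distrib]
    apply Finset.sum_congr rfl
    intro i _
    rw [← Finset.sum_add_distrib, ← Finset.sum_add_distrib]
    apply Finset.sum_congr rfl
    intro j _
    exact key i j
  rw [hw]
  -- compute the two correction sums
  have hS1 : (∑ i : Fin d, ∑ j : Fin d, if i = i₀ ∧ i < j ∧ bead x j < bead x i₀ then 1 else 0)
      = ∑ j : Fin d, (if i₀ < j ∧ bead x j < bead x i₀ then 1 else 0) := by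
    have hpt : ∀ i : Fin d, (∑ j : Fin d, if i = i₀ ∧ i < j ∧ bead x j < bead x i₀ then 1 else 0)
        = if i = i₀ then (∑ j : Fin d, if i₀ < j ∧ bead x j < bead x i₀ then 1 else 0) else 0 := by
      intro i
      by_cases hi : i = i₀
      · subst hi
        rw [if_pos rfl]
        apply Finset.sum_congr rfl
        intro j _
        by_cases h2 : i₀ < j ∧ bead x j < bead x i₀
        · rw [if_pos ⟨rfl, h2⟩, if_pos h2]
        · rw [if_neg (by intro hcon; exact h2 hcon.2), if_neg h2]
      · rw [if_neg hi]
        apply Finset.sum_eq_zero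
        intro j _
        rw [if_neg (by intro hcon; exact hi hcon.1)]
    rw [Finset.sum_congr rfl (fun i _ => hpt i), Finset.sum_ite_eq' Finset.univ i₀]
    rw [if_pos (Finset.mem_univ i₀)]
  have hS2 : (∑ i : Fin d, ∑ j : Fin d, if j = i₀ ∧ i < j ∧ bead x i < bead x i₀ then 1 else 0)
      = ∑ i : Fin d, (if i < i₀ ∧ bead x i < bead x i₀ then 1 else 0) := by
    apply Finset.sum_congr rfl
    intro i _
    have hpt : ∀ j : Fin d, (if j = i₀ ∧ i < j ∧ bead x i < bead x i₀ then (1:ℕ) else 0)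
        = if j = i₀ then (if i < i₀ ∧ bead x i < bead x i₀ then 1 else 0) else 0 := by
      intro j
      by_cases hj : j = i₀
      · subst hj
        rw [if_pos rfl]
        by_cases h2 : i < i₀ ∧ bead x i < bead x i₀
        · rw [if_pos ⟨rfl, h2⟩, if_pos h2]
        · rw [if_neg (by intro hcon; exact h2 hcon.2), if_neg h2]
      · rw [if_neg (by intro hcon; exact hj hcon.1), if_neg hj]
    rw [Finset.sum_congr rfl (fun j _ => hpt j), Finset.sum_ite_eq' Finset.univ i₀]
    rw [if_pos (Finset.mem_univ i₀)]
  rw [hS1, hS2]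
  have hp : (p : ℕ) = ∑ k : Fin d, (if bead x k < bead x i₀ then 1 else 0) := by
    have h1 : rk x (idx x p) = (p : ℕ) := rk_idx x p
    rw [← hi₀] at h1
    rw [← h1]
    unfold rk
    rw [Finset.card_filter]
  rw [hp]
  have hsplit : ∀ k : Fin d, (if bead x k < bead x i₀ then (1:ℕ) else 0)
      = (if i₀ < k ∧ bead x k < bead x i₀ then 1 else 0)
        + (if k < i₀ ∧ bead x k < bead x i₀ then 1 else 0) := by
    intro k
    by_cases hP : bead x k < bead x i₀
    · have hk : k ≠ i₀ := by
        intro h; rw [h] at hP; exact lt_irrefl _ hP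
      rcases lt_or_gt_of_ne hk with h | h
      · rw [if_pos hP, if_neg (by intro hcon; exact absurd hcon.1 (not_lt.mpr (le_of_lt h))),
          if_pos ⟨h, hP⟩]
      · rw [if_pos hP, if_pos ⟨h, hP⟩,
          if_neg (by intro hcon; exact absurd hcon.1 (not_lt.mpr (le_of_lt h)))]
    · rw [if_neg hP, if_neg (by intro hcon; exact hP hcon.2),
        if_neg (by intro hcon; exact hP hcon.2)]
  rw [Finset.sum_congr rfl (fun k _ => hsplit k), Finset.sum_add_distrib]
  omega


lemma bead_ins_self {x : Fin d → ℕ} {p : Fin d} :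
    bead (ins p x) (idx x p) = bead x (idx x p) + d := bead_update_self x (idx x p)

lemma bead_ins_ne {x : Fin d → ℕ} {p : Fin d} {j : Fin d} (h : j ≠ idx x p) :
    bead (ins p x) j = bead x j := bead_update_ne x _ h

lemma cap_ins {x : Fin d → ℕ} {p p' : Fin d} (hc : Cap x (idx x p)) (hpp' : p ≤ p') :
    Cap (ins p x) (idx (ins p x) p') := by
  classical
  set x' := ins p x with hx'
  set i := idx x p with hi
  set i' := idx x' p' with hi'
  have hmax : ∀ j, bead x' j ≤ bead x' i := by
    intro j
    by_cases hj : j = i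
    · rw [hj]
    · exact le_of_lt (ins_max hc j hj)
  by_cases hii : i' = i
  · intro j
    rw [hii]
    have := hmax j
    omega
  · have hge : bead x i ≤ bead x i' := by
      by_contra hcon
      push_neg at hcon
      have hfe : (univ.filter (fun j => bead x' j < bead x' i'))
          = (univ.filter (fun j => bead x j < bead x i')) := by
        apply Finset.filter_congr
        intro j _
        have hbi' : bead x' i' = bead x i' := bead_ins_ne hii
        by_cases hj : j = i
        · rw [hj]
          have h1 : bead x' i = bead x i + d := bead_ins_self
          simp only [hbi', h1]
          constructor
          · intro hcc; omega
          · intro hcc; omega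
        · rw [bead_ins_ne hj, hbi']
      have h1 : rk x' i' = rk x i' := by
        unfold rk
        rw [hfe]
      have h2 : rk x' i' = (p' : ℕ) := rk_idx x' p'
      have h3 : rk x i' < rk x i := rk_lt_rk hcon
      have h4 : rk x i = (p : ℕ) := rk_idx x p
      have h5 : (p : ℕ) ≤ (p' : ℕ) := hpp'
      omega
    intro j
    have hj := hmax j
    have hbi' : bead x' i' = bead x i' := bead_ins_ne hii
    have h1 : bead x' i = bead x i + d := bead_ins_self
    omega


section Peel

variable [NeZero d]

def top : Fin d := ⟨d - 1, by have := NeZero.pos d; omega⟩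

noncomputable def istar (x : Fin d → ℕ) : Fin d := idx x top

noncomputable def dec (x : Fin d → ℕ) : Fin d → ℕ :=
  Function.update x (istar x) (x (istar x) - 1)

noncomputable def pstar (x : Fin d → ℕ) : Fin d := rkF (dec x) (istar x)

lemma istar_max (x : Fin d → ℕ) : ∀ j, j ≠ istar x → bead x j < bead x (istar x) := by
  have hrk : rk x (istar x) = d - 1 := by
    have := rk_idx x (top : Fin d)
    exact this
  have hsub : univ.filter (fun j => bead x j < bead x (istar x)) ⊆ univ.erase (istar x) := by
    intro j hj
    rw [mem_filter] at hj
    rw [mem_erase]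
    exact ⟨fun hji => (by rw [hji] at hj; exact lt_irrefl _ hj.2), mem_univ j⟩
  have hcard : (univ.erase (istar x)).card ≤ (univ.filter (fun j => bead x j < bead x (istar x))).card := by
    rw [Finset.card_erase_of_mem (mem_univ _), Finset.card_univ, Fintype.card_fin]
    unfold rk at hrk
    omega
  have heq := Finset.eq_of_subset_of_card_le hsub hcard
  intro j hj
  have : j ∈ univ.erase (istar x) := mem_erase.mpr ⟨hj, mem_univ j⟩
  rw [← heq, mem_filter] at this
  exact this.2

lemma x_istar_pos (x : Fin d → ℕ) (hx : size x ≠ 0) : 1 ≤ x (istar x) := by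
  have hex : ∃ j, x j ≠ 0 := by
    by_contra hcon
    push_neg at hcon
    exact hx (Finset.sum_eq_zero (fun i _ => hcon i))
  obtain ⟨j, hj⟩ := hex
  by_contra hcon
  push_neg at hcon
  have hz : x (istar x) = 0 := by omega
  have hji : j ≠ istar x := by
    intro h; rw [h] at hj; exact hj hz
  have hlt := istar_max x j hji
  unfold bead at hlt
  rw [hz] at hlt
  have h1 : d * 1 ≤ d * x j := Nat.mul_le_mul_left d (by omega)
  have h2 := (istar x).isLt
  omega

lemma size_dec (x : Fin d → ℕ) (hx : size x ≠ 0) : size (dec x) + 1 = size x := by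
  have hpos := x_istar_pos x hx
  unfold size dec
  have := sum_update_helper' x (istar x) (x (istar x) - 1)
  omega

lemma idx_dec_pstar (x : Fin d → ℕ) : idx (dec x) (pstar x) = istar x := idx_rkF _ _

lemma ins_pstar_dec (x : Fin d → ℕ) (hx : size x ≠ 0) : ins (pstar x) (dec x) = x := by
  have hpos := x_istar_pos x hx
  unfold ins
  rw [idx_dec_pstar]
  have h1 : dec x (istar x) = x (istar x) - 1 := Function.update_self _ _ _
  rw [h1, Nat.sub_add_cancel hpos]
  unfold dec
  rw [Function.update_idem, Function.update_eq_self]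

lemma bead_dec_self (x : Fin d → ℕ) (hx : size x ≠ 0) :
    bead (dec x) (istar x) + d = bead x (istar x) := by
  have hpos := x_istar_pos x hx
  unfold bead dec
  rw [Function.update_self]
  have h1 : d * (x (istar x) - 1) + d = d * x (istar x) := by
    have h2 : d * (x (istar x) - 1) + d = d * ((x (istar x) - 1) + 1) := by ring
    rw [h2, Nat.sub_add_cancel hpos]
  omega

lemma bead_dec_ne (x : Fin d → ℕ) {j : Fin d} (h : j ≠ istar x) :
    bead (dec x) j = bead x j := bead_update_ne x _ h

lemma cap_dec (x : Fin d → ℕ) (hx : size x ≠ 0) : Cap (dec x) (istar x) := by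
  intro j
  have hd := bead_dec_self x hx
  by_cases hj : j = istar x
  · rw [hj]; omega
  · rw [bead_dec_ne x hj]
    have := istar_max x j hj
    omega

lemma peel_ins {x : Fin d → ℕ} {p : Fin d} (hc : Cap x (idx x p)) :
    istar (ins p x) = idx x p ∧ dec (ins p x) = x ∧ pstar (ins p x) = p := by
  classical
  set x' := ins p x with hx'
  set i := idx x p with hi
  have hrk : rkF x' i = top := by
    apply Fin.ext
    show rk x' i = d - 1
    have hfe : univ.filter (fun j => bead x' j < bead x' i) = univ.erase i := by
      apply Finset.ext
      intro j
      rw [mem_filter, mem_erase]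
      constructor
      · intro hj
        refine ⟨?_, mem_univ j⟩
        intro hji
        rw [hji] at hj
        exact lt_irrefl _ hj.2
      · intro hj
        exact ⟨mem_univ j, ins_max hc j hj.1⟩
    unfold rk
    rw [hfe, Finset.card_erase_of_mem (mem_univ _), Finset.card_univ, Fintype.card_fin]
  have h1 : istar x' = i := by
    unfold istar
    rw [← hrk, idx_rkF]
  have h2 : dec x' = x := by
    unfold dec
    rw [h1]
    have hv : x' i = x i + 1 := Function.update_self _ _ _
    rw [hv]
    show Function.update (Function.update x i (x i + 1)) i (x i + 1 - 1) = x
    rw [Function.update_idem, Nat.add_sub_cancel, Function.update_eq_self]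
  refine ⟨h1, h2, ?_⟩
  unfold pstar
  rw [h1, h2]
  exact rkF_idx x p

lemma pstar_mono (x : Fin d → ℕ) (hx : size x ≠ 0) (hy : size (dec x) ≠ 0) :
    pstar (dec x) ≤ pstar x := by
  classical
  set y := dec x with hy'
  set i1 := istar x with hi1
  set i2 := istar y with hi2
  set z := dec y with hz
  have hpx : (pstar x : ℕ) = rk y i1 := rfl
  have hpy : (pstar y : ℕ) = rk z i2 := rfl
  have hbx : bead y i1 + d = bead x i1 := bead_dec_self x hx
  have hby : bead z i2 + d = bead y i2 := bead_dec_self y hy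
  have hyle : ∀ k, bead y k ≤ bead x k := by
    intro k
    by_cases hk : k = i1
    · rw [hk]; omega
    · rw [bead_dec_ne x hk]
  have hxmax : ∀ k, bead x k ≤ bead x i1 := by
    intro k
    by_cases hk : k = i1
    · rw [hk]
    · exact le_of_lt (istar_max x k hk)
  have hsub : univ.filter (fun j => bead z j < bead z i2)
      ⊆ univ.filter (fun j => bead y j < bead y i1) := by
    intro j hj
    rw [mem_filter] at hj ⊢
    refine ⟨mem_univ j, ?_⟩
    have hji2 : j ≠ i2 := by
      intro h
      rw [h] at hj
      exact lt_irrefl _ hj.2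
    have hjz : bead z j = bead y j := bead_dec_ne y hji2
    rw [hjz] at hj
    have h3 : bead y i2 ≤ bead x i1 := le_trans (hyle i2) (hxmax i2)
    have := hj.2
    omega
  show (pstar y : ℕ) ≤ (pstar x : ℕ)
  rw [hpx, hpy]
  exact Finset.card_le_card hsub

end Peel


/-! ### Lists of parts -/

noncomputable def insL : List (Fin d) → (Fin d → ℕ)
  | [] => fun _ => 0
  | p :: t => ins p (insL t)

lemma bead_zero (j : Fin d) : bead (fun _ => 0 : Fin d → ℕ) j = (j : ℕ) := by
  simp [bead]

lemma rkF_zero (i : Fin d) : rkF (fun _ => 0 : Fin d → ℕ) i = i := by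
  apply Fin.ext
  show rk (fun _ => 0) i = (i : ℕ)
  unfold rk
  have hfe : univ.filter (fun j : Fin d => bead (fun _ => 0) j < bead (fun _ => 0) i)
      = univ.filter (fun j : Fin d => j < i) := by
    apply Finset.filter_congr
    intro j _
    rw [bead_zero, bead_zero]
    exact Iff.symm Fin.lt_iff_val_lt_val
  rw [hfe]
  have h2 : Finset.univ.filter (fun j : Fin d => j < i) = Finset.Iio i := by
    ext j; simp
  rw [h2]
  simp [Fin.card_Iio]

lemma idx_zero (p : Fin d) : idx (fun _ => 0 : Fin d → ℕ) p = p := by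
  have := idx_rkF (fun _ => 0 : Fin d → ℕ) p
  rw [rkF_zero] at this
  exact this

lemma cap_zero (p : Fin d) : Cap (fun _ => 0 : Fin d → ℕ) (idx (fun _ => 0) p) := by
  rw [idx_zero]
  intro j
  rw [bead_zero, bead_zero]
  have := j.isLt
  omega

lemma cap_insL (l : List (Fin d)) (hs : l.Pairwise (· ≥ ·)) (p : Fin d)
    (hp : ∀ q ∈ l, q ≤ p) : Cap (insL l) (idx (insL l) p) := by
  induction l generalizing p with
  | nil => exact cap_zero p
  | cons q t ih =>
    rw [List.pairwise_cons] at hs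
    have hcap := ih hs.2 q (fun r hr => hs.1 r hr)
    exact cap_ins hcap (hp q (List.mem_cons_self (a := q) (l := t)))

lemma size_insL (l : List (Fin d)) (hs : l.Pairwise (· ≥ ·)) : size (insL l) = l.length := by
  induction l with
  | nil => simp [insL, size]
  | cons q t ih =>
    rw [List.pairwise_cons] at hs
    show size (ins q (insL t)) = t.length + 1
    rw [size_ins, ih hs.2]

lemma weight_insL (l : List (Fin d)) (hs : l.Pairwise (· ≥ ·)) :
    weight (insL l) = (l.map Fin.val).sum := by
  induction l with
  | nil => simp [insL, weight]
  | cons q t ih =>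
    rw [List.pairwise_cons] at hs
    have hcap := cap_insL t hs.2 q (fun r hr => hs.1 r hr)
    show weight (ins q (insL t)) = _
    rw [weight_ins hcap, ih hs.2]
    simp [Nat.add_comm]

lemma size_insL_cons_ne (q : Fin d) (t : List (Fin d)) (hs : (q :: t).Pairwise (· ≥ ·)) :
    size (insL (q :: t)) ≠ 0 := by
  rw [size_insL _ hs]
  simp

lemma peel_insL [NeZero d] (q : Fin d) (t : List (Fin d)) (hs : (q :: t).Pairwise (· ≥ ·)) :
    istar (insL (q :: t)) = idx (insL t) q ∧ dec (insL (q :: t)) = insL t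
      ∧ pstar (insL (q :: t)) = q := by
  rw [List.pairwise_cons] at hs
  exact peel_ins (cap_insL t hs.2 q (fun r hr => hs.1 r hr))

lemma insL_inj [NeZero d] : ∀ (l l' : List (Fin d)), l.Pairwise (· ≥ ·) → l'.Pairwise (· ≥ ·) →
    insL l = insL l' → l = l' := by
  intro l
  induction l with
  | nil =>
    intro l' _ hs' h
    cases l' with
    | nil => rfl
    | cons q' t' =>
      exfalso
      apply size_insL_cons_ne q' t' hs'
      rw [← h]
      simp [insL, size]
  | cons q t ih =>
    intro l' hs hs' h
    cases l' with
    | nil =>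
      exfalso
      apply size_insL_cons_ne q t hs
      rw [h]
      simp [insL, size]
    | cons q' t' =>
      have h1 := peel_insL q t hs
      have h2 := peel_insL q' t' hs'
      have hq : q = q' := by
        rw [← h1.2.2, ← h2.2.2, h]
      have ht : insL t = insL t' := by
        rw [← h1.2.1, ← h2.2.1, h]
      rw [List.pairwise_cons] at hs hs'
      rw [hq, ih t' hs.2 hs'.2 ht]

lemma insL_surj [NeZero d] : ∀ (n : ℕ) (x : Fin d → ℕ), size x = n →
    ∃ l : List (Fin d), l.Pairwise (· ≥ ·) ∧ insL l = x := by
  intro n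
  induction n using Nat.strong_induction_on with
  | _ n ih =>
    intro x hx
    by_cases h0 : size x = 0
    · refine ⟨[], List.Pairwise.nil, ?_⟩
      show (fun _ => 0) = x
      funext i
      exact ((Finset.sum_eq_zero_iff.mp h0) i (mem_univ i)).symm
    · have hsd := size_dec x h0
      have hlt : size (dec x) < n := by omega
      obtain ⟨l', hs', hl'⟩ := ih (size (dec x)) hlt (dec x) rfl
      refine ⟨pstar x :: l', ?_, ?_⟩
      · rw [List.pairwise_cons]
        refine ⟨?_, hs'⟩
        intro b hb
        cases l' with
        | nil => exact absurd hb List.not_mem_nil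
        | cons q' t' =>
          have hyne : size (dec x) ≠ 0 := by
            rw [← hl']
            exact size_insL_cons_ne q' t' hs'
          have hq' : pstar (insL (q' :: t')) = q' := (peel_insL q' t' hs').2.2
          rw [hl'] at hq'
          have hmono := pstar_mono x h0 hyne
          rw [hq'] at hmono
          rcases List.mem_cons.mp hb with hbq | hbt
          · rw [hbq]; exact hmono
          · rw [List.pairwise_cons] at hs'
            exact le_trans (hs'.1 b hbt) hmono
      · show ins (pstar x) (insL l') = x
        rw [hl']
        exact ins_pstar_dec x h0


/-! ### Multisets of parts -/

noncomputable def phi (s : Multiset (Fin d)) : Fin d → ℕ := insL (s.sort (· ≥ ·))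

lemma size_phi (s : Multiset (Fin d)) : size (phi s) = Multiset.card s := by
  rw [phi, size_insL _ (Multiset.pairwise_sort s _), Multiset.length_sort]

lemma weight_phi (s : Multiset (Fin d)) : weight (phi s) = (s.map Fin.val).sum := by
  rw [phi, weight_insL _ (Multiset.pairwise_sort s _)]
  have h1 : (s.map Fin.val).sum
      = (Multiset.map Fin.val (↑(Multiset.sort s (· ≥ ·)) : Multiset (Fin d))).sum := by
    rw [Multiset.sort_eq]
  rw [h1, Multiset.map_coe, Multiset.sum_coe]

lemma phi_bij [NeZero d] : Function.Bijective (phi : Multiset (Fin d) → (Fin d → ℕ)) := by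
  constructor
  · intro s s' h
    have := insL_inj _ _ (Multiset.pairwise_sort s _) (Multiset.pairwise_sort s' _) h
    have h2 := congrArg (fun l : List (Fin d) => (l : Multiset (Fin d))) this
    simpa [Multiset.sort_eq] using h2
  · intro x
    obtain ⟨l, hs, hl⟩ := insL_surj (size x) x rfl
    refine ⟨(l : Multiset (Fin d)), ?_⟩
    have hsort : Multiset.sort (l : Multiset (Fin d)) (· ≥ ·) = l := by
      apply List.Perm.eq_of_pairwise' (Multiset.pairwise_sort _ _) hs
      rw [← Multiset.coe_eq_coe]
      rw [Multiset.sort_eq]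
    rw [phi, hsort, hl]

/-! ### From functions to multisets -/

def toM (m : Fin d → ℕ) : Multiset (Fin d) := ∑ p, Multiset.replicate (m p) p

lemma count_toM (m : Fin d → ℕ) (q : Fin d) : Multiset.count q (toM m) = m q := by
  classical
  rw [toM]
  rw [Multiset.count_sum']
  have : ∀ p : Fin d, Multiset.count q (Multiset.replicate (m p) p)
      = if p = q then m p else 0 := by
    intro p
    rw [Multiset.count_replicate]
  rw [Finset.sum_congr rfl (fun p _ => this p)]
  rw [Finset.sum_ite_eq' Finset.univ q]
  rw [if_pos (Finset.mem_univ q)]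

lemma toM_bij : Function.Bijective (toM : (Fin d → ℕ) → Multiset (Fin d)) := by
  constructor
  · intro m m' h
    funext q
    rw [← count_toM m q, ← count_toM m' q, h]
  · intro s
    refine ⟨fun p => Multiset.count p s, ?_⟩
    apply Multiset.ext.mpr
    intro q
    rw [count_toM]

def cardHom' : Multiset (Fin d) →+ ℕ where
  toFun := Multiset.card
  map_zero' := by simp
  map_add' := by intro a b; simp

lemma card_toM (m : Fin d → ℕ) : Multiset.card (toM m) = ∑ p, m p := by
  rw [toM]
  show cardHom' (∑ p, Multiset.replicate (m p) p) = _
  rw [map_sum cardHom' (fun p => Multiset.replicate (m p) p) Finset.univ]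
  apply Finset.sum_congr rfl
  intro p _
  show Multiset.card (Multiset.replicate (m p) p) = m p
  rw [Multiset.card_replicate]

noncomputable def sumValHom : Multiset (Fin d) →+ ℕ where
  toFun := fun s => (s.map Fin.val).sum
  map_zero' := by simp
  map_add' := by intro a b; simp

lemma sumval_toM (m : Fin d → ℕ) : ((toM m).map Fin.val).sum = ∑ p, m p * (p : ℕ) := by
  have h := map_sum (sumValHom (d := d)) (fun p => Multiset.replicate (m p) p) Finset.univ
  rw [toM]
  show sumValHom (∑ p, Multiset.replicate (m p) p) = _
  rw [h]
  apply Finset.sum_congr rfl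
  intro p _
  show ((Multiset.replicate (m p) p).map Fin.val).sum = m p * (p : ℕ)
  rw [Multiset.map_replicate, Multiset.sum_replicate, smul_eq_mul]

/-! ### The master counting identity -/

lemma main_card [NeZero d] (n W : ℕ) :
    Nat.card {x : Fin d → ℕ // size x = n ∧ weight x = W}
      = Nat.card {m : Fin d → ℕ // (∑ p, m p) = n ∧ (∑ p, m p * (p : ℕ)) = W} := by
  apply Nat.card_congr
  symm
  apply Equiv.subtypeEquiv ((Equiv.ofBijective toM toM_bij).trans (Equiv.ofBijective phi phi_bij))
  intro m
  show _ ↔ size (phi (toM m)) = n ∧ weight (phi (toM m)) = W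
  rw [size_phi, weight_phi, card_toM, sumval_toM]

/-- Finiteness of configuration sets with bounded coordinate-sum. -/
lemma finite_cond {k n : ℕ} (Q : (Fin k → ℕ) → Prop) (hQ : ∀ m, Q m → (∑ i, m i) = n) :
    Finite {m : Fin k → ℕ // Q m} := by
  have hb : ∀ (m : {m : Fin k → ℕ // Q m}) (i : Fin k), m.1 i < n + 1 := by
    intro m i
    have h1 := Finset.single_le_sum (f := m.1) (fun j _ => Nat.zero_le _) (Finset.mem_univ i)
    have h2 := hQ m.1 m.2
    omega
  apply Finite.of_injective (fun m : {m : Fin k → ℕ // Q m} =>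
    (fun i => (⟨m.1 i, hb m i⟩ : Fin (n+1))))
  intro a b hab
  apply Subtype.ext; funext i
  exact congrArg Fin.val (congrFun hab i)

noncomputable def mS (d : ℕ) : MvPowerSeries (Fin 2) ℤ :=
  fun e => (Nat.card {m : Fin d → ℕ // (∑ p, m p) = e 0 ∧ (∑ p, m p * (p : ℕ)) = e 1} : ℤ)

lemma coeff_mS (d : ℕ) (e : Fin 2 →₀ ℕ) :
    MvPowerSeries.coeff e (mS d) =
      (Nat.card {m : Fin d → ℕ // (∑ p, m p) = e 0 ∧ (∑ p, m p * (p : ℕ)) = e 1} : ℤ) := rfl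

lemma mS_zero : mS 0 = 1 := by
  apply MvPowerSeries.ext
  intro e
  rw [coeff_mS, MvPowerSeries.coeff_one]
  by_cases h : e = 0
  · subst h
    haveI : Unique {m : Fin 0 → ℕ // (∑ p, m p) = (0 : Fin 2 →₀ ℕ) 0 ∧ (∑ p, m p * (p : ℕ)) = (0 : Fin 2 →₀ ℕ) 1} := by
      refine ⟨⟨⟨fun i => i.elim0, by simp⟩⟩, ?_⟩
      intro a; apply Subtype.ext; funext i; exact i.elim0
    simp [Nat.card_unique]
  · have hne : e 0 ≠ 0 ∨ e 1 ≠ 0 := by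
      by_contra hc
      push_neg at hc
      exact h (Finsupp.ext (by rw [Fin.forall_fin_two]; exact ⟨hc.1, hc.2⟩))
    haveI : IsEmpty {m : Fin 0 → ℕ // (∑ p, m p) = e 0 ∧ (∑ p, m p * (p : ℕ)) = e 1} := by
      constructor; intro m
      have h0 := m.2.1; have h1 := m.2.2
      simp at h0 h1
      rcases hne with hh | hh
      · exact hh h0.symm
      · exact hh h1.symm
    rw [if_neg h, Nat.card_of_isEmpty]
    simp

/-- generic sum-update helper -/
lemma sum_update_helper {k : ℕ} (f : Fin k → ℕ) (i : Fin k) (c : ℕ) :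
    (∑ p, Function.update f i c p) + f i = (∑ p, f p) + c := by
  classical
  rw [Finset.sum_update_of_mem (Finset.mem_univ i)]
  have h1 : Finset.univ \ {i} = Finset.univ.erase i := by
    ext j; simp [Finset.mem_erase, and_comm]
  rw [h1]
  have h2 := Finset.sum_erase_add Finset.univ f (Finset.mem_univ i)
  omega

lemma update_mul_fun {k : ℕ} (m : Fin k → ℕ) (i : Fin k) (c : ℕ) :
    (fun p => Function.update m i c p * (p : ℕ)) =
      Function.update (fun p => m p * (p : ℕ)) i (c * (i : ℕ)) := by
  funext p
  by_cases hp : p = i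
  · subst hp; simp
  · simp [Function.update_apply, hp]

lemma card_split (d a b : ℕ) :
    Nat.card {m : Fin (d+1) → ℕ // (∑ p, m p) = a ∧ (∑ p, m p * (p : ℕ)) = b}
    = Nat.card {m : Fin d → ℕ // (∑ p, m p) = a ∧ (∑ p, m p * (p : ℕ)) = b}
      + (if 1 ≤ a ∧ d ≤ b then
          Nat.card {m : Fin (d+1) → ℕ // (∑ p, m p) = a - 1 ∧ (∑ p, m p * (p : ℕ)) = b - d}
         else 0) := by
  classical
  set A := {m : Fin (d+1) → ℕ // (∑ p, m p) = a ∧ (∑ p, m p * (p : ℕ)) = b} with hA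
  haveI : Finite A := finite_cond (n := a) _ (fun m hm => hm.1)
  set P : A → Prop := fun m => m.1 (Fin.last d) = 0 with hP
  have hsplit : Nat.card A = Nat.card {m : A // P m} + Nat.card {m : A // ¬ P m} := by
    rw [← Nat.card_sum, Nat.card_congr (Equiv.sumCompl P).symm]
  rw [hsplit]
  congr 1
  · -- zero-last part
    apply Nat.card_congr
    refine ⟨fun m => ⟨Fin.init m.1.1, ?_⟩, fun m => ⟨⟨Fin.snoc m.1 0, ?_⟩, by simp [hP]⟩, ?_, ?_⟩
    · have h0 : m.1.1 (Fin.last d) = 0 := m.2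
      have hs := m.1.2.1
      have hw := m.1.2.2
      rw [Fin.sum_univ_castSucc] at hs hw
      rw [h0] at hs hw
      simp only [Fin.coe_castSucc, Nat.zero_mul, zero_mul, Nat.add_zero, add_zero] at hs hw
      constructor
      · show ∑ i : Fin d, m.1.1 i.castSucc = a
        omega
      · show ∑ i : Fin d, m.1.1 i.castSucc * (i : ℕ) = b
        omega
    · have hs := m.2.1
      have hw := m.2.2
      constructor
      · rw [Fin.sum_univ_castSucc]; simp [hs]
      · rw [Fin.sum_univ_castSucc]; simp [hw]
    · intro m
      apply Subtype.ext; apply Subtype.ext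
      funext i
      induction i using Fin.lastCases with
      | last =>
        show Fin.snoc (Fin.init m.1.1) 0 (Fin.last d) = m.1.1 (Fin.last d)
        rw [Fin.snoc_last]
        exact (m.2).symm
      | cast j =>
        show Fin.snoc (Fin.init m.1.1) 0 j.castSucc = m.1.1 j.castSucc
        rw [Fin.snoc_castSucc]
        rfl
    · intro m
      exact Subtype.ext (Fin.init_snoc (α := fun _ : Fin (d+1) => ℕ) (0 : ℕ) (m.1 : Fin d → ℕ))
  · -- nonzero-last part
    by_cases hc : 1 ≤ a ∧ d ≤ b
    · rw [if_pos hc]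
      apply Nat.card_congr
      refine ⟨fun m => ⟨Function.update m.1.1 (Fin.last d) (m.1.1 (Fin.last d) - 1), ?_⟩,
             fun m => ⟨⟨Function.update m.1 (Fin.last d) (m.1 (Fin.last d) + 1), ?_⟩, ?_⟩, ?_, ?_⟩
      · have hpos : 1 ≤ m.1.1 (Fin.last d) := Nat.one_le_iff_ne_zero.mpr m.2
        have hs := m.1.2.1
        have hw := m.1.2.2
        have H1 := sum_update_helper m.1.1 (Fin.last d) (m.1.1 (Fin.last d) - 1)
        have H2 := sum_update_helper (fun p => m.1.1 p * (p : ℕ)) (Fin.last d)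
          ((m.1.1 (Fin.last d) - 1) * ((Fin.last d : Fin (d+1)) : ℕ))
        rw [← update_mul_fun] at H2
        simp only [Fin.val_last] at H2
        have hmul : (m.1.1 (Fin.last d) - 1) * d + d = m.1.1 (Fin.last d) * d := by
          have h9 : (m.1.1 (Fin.last d) - 1) * d + d = (m.1.1 (Fin.last d) - 1 + 1) * d := by ring
          rw [h9, Nat.sub_add_cancel hpos]
        constructor
        · omega
        · omega
      · have hs := m.2.1
        have hw := m.2.2
        have H1 := sum_update_helper m.1 (Fin.last d) (m.1 (Fin.last d) + 1)
        have H2 := sum_update_helper (fun p => m.1 p * (p : ℕ)) (Fin.last d)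
          ((m.1 (Fin.last d) + 1) * ((Fin.last d : Fin (d+1)) : ℕ))
        rw [← update_mul_fun] at H2
        simp only [Fin.val_last] at H2
        constructor
        · omega
        · have : (m.1 (Fin.last d) + 1) * d = m.1 (Fin.last d) * d + d := by ring
          omega
      · show ¬ (Function.update m.1 (Fin.last d) (m.1 (Fin.last d) + 1) (Fin.last d) = 0)
        simp
      · intro m
        apply Subtype.ext; apply Subtype.ext
        have hpos : 1 ≤ m.1.1 (Fin.last d) := Nat.one_le_iff_ne_zero.mpr m.2
        show Function.update (Function.update m.1.1 (Fin.last d) (m.1.1 (Fin.last d) - 1))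
          (Fin.last d) _ = m.1.1
        rw [Function.update_idem]
        simp only [Function.update_self]
        rw [Nat.sub_add_cancel hpos, Function.update_eq_self]
      · intro m
        apply Subtype.ext
        show Function.update (Function.update m.1 (Fin.last d) (m.1 (Fin.last d) + 1))
          (Fin.last d) _ = m.1
        rw [Function.update_idem]
        simp only [Function.update_self]
        rw [Nat.add_sub_cancel, Function.update_eq_self]
    · rw [if_neg hc]
      have : IsEmpty {m : A // ¬ P m} := by
        constructor
        intro m
        apply hc
        have hpos : 1 ≤ m.1.1 (Fin.last d) := Nat.one_le_iff_ne_zero.mpr m.2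
        have hs := m.1.2.1
        have hw := m.1.2.2
        have h1 := Finset.single_le_sum (f := m.1.1) (fun j _ => Nat.zero_le _)
          (Finset.mem_univ (Fin.last d))
        have h2 := Finset.single_le_sum (f := fun p => m.1.1 p * (p : ℕ))
          (fun j _ => Nat.zero_le _) (Finset.mem_univ (Fin.last d))
        simp only [Fin.val_last] at h2
        have : d ≤ m.1.1 (Fin.last d) * d := Nat.le_mul_of_pos_left d hpos
        omega
      simp [Nat.card_of_isEmpty]

lemma mS_step (d : ℕ) :
    (1 - MvPowerSeries.X 0 * MvPowerSeries.X 1 ^ d : MvPowerSeries (Fin 2) ℤ) * mS (d+1) = mS d := by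
  classical
  have hX : (MvPowerSeries.X 0 * MvPowerSeries.X 1 ^ d : MvPowerSeries (Fin 2) ℤ)
      = MvPowerSeries.monomial (Finsupp.single 0 1 + Finsupp.single 1 d) 1 := by
    rw [MvPowerSeries.X_def, MvPowerSeries.X_pow_eq, MvPowerSeries.monomial_mul_monomial, one_mul]
  apply MvPowerSeries.ext
  intro e
  rw [sub_mul, one_mul, map_sub, hX, MvPowerSeries.coeff_monomial_mul]
  set u : Fin 2 →₀ ℕ := Finsupp.single 0 1 + Finsupp.single 1 d with hu
  have hu0 : u 0 = 1 := by
    rw [hu, Finsupp.add_apply, Finsupp.single_eq_same, Finsupp.single_eq_of_ne (by decide)]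
    rfl
  have hu1 : u 1 = d := by
    rw [hu, Finsupp.add_apply, Finsupp.single_eq_same, Finsupp.single_eq_of_ne (by decide)]
    omega
  have hle : u ≤ e ↔ 1 ≤ e 0 ∧ d ≤ e 1 := by
    constructor
    · intro h
      rw [Finsupp.le_def] at h
      constructor
      · have := h 0; omega
      · have := h 1; omega
    · intro ⟨h1, h2⟩
      rw [Finsupp.le_def]
      intro i
      match i with
      | 0 => rw [hu0]; exact h1
      | 1 => rw [hu1]; exact h2
  have hsub0 : (e - u) 0 = e 0 - 1 := by rw [Finsupp.tsub_apply, hu0]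
  have hsub1 : (e - u) 1 = e 1 - d := by rw [Finsupp.tsub_apply, hu1]
  have hcs := card_split d (e 0) (e 1)
  rw [coeff_mS, coeff_mS, coeff_mS, hcs]
  by_cases hc : 1 ≤ e 0 ∧ d ≤ e 1
  · rw [if_pos hc, if_pos (hle.mpr hc), hsub0, hsub1]
    push_cast
    ring
  · rw [if_neg hc, if_neg (fun h => hc (hle.mp h))]
    push_cast
    ring

lemma prod_mS (d : ℕ) :
    (∏ i ∈ Finset.range d, (1 - MvPowerSeries.X 0 * MvPowerSeries.X 1 ^ i : MvPowerSeries (Fin 2) ℤ))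
      * mS d = 1 := by
  induction d with
  | zero => simpa using mS_zero
  | succ d ih =>
    rw [Finset.prod_range_succ, mul_assoc, mS_step]
    exact ih


end SpiralAux

open Spiral MvPowerSeries in
/-- For every `d ≥ 1`, `Σ_{x ∈ ℕ^d} t^{n(x)} q^{W(x)} = ∏_{i=0}^{d-1} (1 - t qⁱ)⁻¹`
holds in `ℤ[[t,q]]`; in particular the sum on the left is a well-defined power series
(each coefficient is a finite count). The identity is stated multiplicatively:
`(∏_{i<d} (1 - t qⁱ)) · (Σ_x t^{n(x)} q^{W(x)}) = 1`, which is equivalent since each factor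
`1 - t qⁱ` is a unit of `ℤ[[t,q]]`. -/
theorem statement1 (d : ℕ) (hd : 1 ≤ d) :
    (∀ n W : ℕ, {x : Fin d → ℕ | size x = n ∧ weight x = W}.Finite) ∧
    (∏ i ∈ Finset.range d, (1 - X 0 * X 1 ^ i : MvPowerSeries (Fin 2) ℤ)) *
      genSeries d = 1 := by
  constructor
  · intro n W
    have hfin : Finite {x : Fin d → ℕ // size x = n ∧ weight x = W} :=
      SpiralAux.finite_cond (n := n) _ (fun m hm => hm.1)
    exact Set.finite_coe_iff.mp hfin
  · haveI : NeZero d := ⟨by omega⟩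
    have hgm : genSeries d = SpiralAux.mS d := by
      apply MvPowerSeries.ext
      intro e
      show ((Nat.card {x : Fin d → ℕ // size x = e 0 ∧ weight x = e 1} : ℤ)) =
        ((Nat.card {m : Fin d → ℕ // (∑ p, m p) = e 0 ∧ (∑ p, m p * (p : ℕ)) = e 1} : ℤ))
      rw [SpiralAux.main_card (e 0) (e 1)]
    rw [hgm]
    exact SpiralAux.prod_mS d
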